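/- (Correctness of teleportation over the anonymously established pair, Step 4 of the anonymous communication protocol.) Work in the 3-qubit space EuclideanSpace ℂ (Fin 3 → ZMod 2) with qubits ordered (s₁, s₂, r), where s₁ carries the message φ = α|0⟩ + β|1⟩ (α, β ∈ ℂ) and (s₂, r) carry the anonymously established pair ψ⁺ = (|01⟩ + |10⟩)/√2. Then applying CNOT with control s₁ and target s₂, followed by Hadamard on s₁, to φ ⊗ ψ⁺ yields exactly (1/2)[ |00⟩ ⊗ Xφ + |01⟩ ⊗ φ + |10⟩ ⊗ XZφ + |11⟩ ⊗ Zφ ]; hence for each Bell outcome (m₀, m₁) the receiver recovers φ by applying the corresponding Pauli correction, and each outcome occurs with probability 1/4 when |α|² + |β|² = 1. -/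

import Mathlib

/-- Amplitude of the EPR pair `ψ⁺ = (|01⟩ + |10⟩)/√2` at bitstring `(b, c)`. -/
noncomputable def eprAmp (b c : ZMod 2) : ℂ :=
  if (b = 0 ∧ c = 1) ∨ (b = 1 ∧ c = 0) then ((1 / Real.sqrt 2 : ℝ) : ℂ) else 0

/-- The joint state `φ ⊗ ψ⁺` with `φ = α|0⟩ + β|1⟩` on qubit `s₁ = 0` and the
pair `ψ⁺` on qubits `(s₂, r) = (1, 2)`. -/
noncomputable def jointState3 (α β : ℂ) : EuclideanSpace ℂ (Fin 3 → ZMod 2) :=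
  WithLp.toLp 2 (fun x => (if x 0 = 0 then α else β) * eprAmp (x 1) (x 2))

/-- CNOT with control qubit `0` and target qubit `1` (a self-inverse basis permutation). -/
noncomputable def cnot01 (ψ : EuclideanSpace ℂ (Fin 3 → ZMod 2)) :
    EuclideanSpace ℂ (Fin 3 → ZMod 2) :=
  WithLp.toLp 2 (fun x => ψ (Function.update x 1 (x 1 + x 0)))

/-- Hadamard gate on qubit `0`. -/
noncomputable def had0 (ψ : EuclideanSpace ℂ (Fin 3 → ZMod 2)) :
    EuclideanSpace ℂ (Fin 3 → ZMod 2) :=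
  WithLp.toLp 2 (fun x => ((1 / Real.sqrt 2 : ℝ) : ℂ) *
    (ψ (Function.update x 0 0) + (if x 0 = 0 then 1 else -1) * ψ (Function.update x 0 1)))

/-- Single-qubit Pauli X on an amplitude function. -/
noncomputable def pX (f : ZMod 2 → ℂ) : ZMod 2 → ℂ := fun b => f (b + 1)

/-- Single-qubit Pauli Z on an amplitude function. -/
noncomputable def pZ (f : ZMod 2 → ℂ) : ZMod 2 → ℂ := fun b => if b = 0 then f b else -f b

/-- The Pauli correction `σ_{m₀m₁}`: `σ₀₀ = X`, `σ₀₁ = I`, `σ₁₀ = XZ`, `σ₁₁ = Z`. -/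
noncomputable def pauliCorr (m0 m1 : ZMod 2) : (ZMod 2 → ℂ) → (ZMod 2 → ℂ) :=
  if m0 = 0 then (if m1 = 0 then pX else id)
  else (if m1 = 0 then pX ∘ pZ else pZ)


lemma zmod2cases (a : ZMod 2) : a = 0 ∨ a = 1 := by revert a; decide

lemma part1 (α β : ℂ) (x : Fin 3 → ZMod 2) :
    had0 (cnot01 (jointState3 α β)) x =
      (1 / 2 : ℂ) * pauliCorr (x 0) (x 1) (fun b => if b = 0 then α else β) (x 2) := by
  rcases zmod2cases (x 0) with h0 | h0 <;> rcases zmod2cases (x 1) with h1 | h1 <;>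
    rcases zmod2cases (x 2) with h2 | h2 <;>
    · have hs : ((Real.sqrt 2 : ℝ) : ℂ)⁻¹ * ((Real.sqrt 2 : ℝ) : ℂ)⁻¹ = 2⁻¹ := by
        rw [← mul_inv, ← Complex.ofReal_mul, Real.mul_self_sqrt (by norm_num)]
        norm_num
      simp [had0, cnot01, jointState3, eprAmp, pauliCorr, pX, pZ, Function.update_apply,
        h0, h1, h2, show (2 : ZMod 2) = 0 from by decide,
        show (1 + 1 : ZMod 2) = 0 from by decide]
      first
        | linear_combination α * hs
        | linear_combination β * hs
        | linear_combination -α * hs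
        | linear_combination -β * hs

lemma part2 (α β : ℂ) (h : ‖α‖ ^ 2 + ‖β‖ ^ 2 = 1) (m0 m1 : ZMod 2) :
    ∑ x ∈ Finset.univ.filter (fun x : Fin 3 → ZMod 2 => x 0 = m0 ∧ x 1 = m1),
      ‖had0 (cnot01 (jointState3 α β)) x‖ ^ 2 = 1 / 4 := by
  have hset : (Finset.univ.filter (fun x : Fin 3 → ZMod 2 => x 0 = m0 ∧ x 1 = m1))
      = {![m0, m1, 0], ![m0, m1, 1]} := by
    ext x
    simp only [Finset.mem_filter, Finset.mem_univ, true_and, Finset.mem_insert,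
      Finset.mem_singleton]
    constructor
    · rintro ⟨h0, h1⟩
      rcases zmod2cases (x 2) with h2 | h2
      · left; funext i; fin_cases i <;> simp [h0, h1, h2]
      · right; funext i; fin_cases i <;> simp [h0, h1, h2]
    · rintro (rfl | rfl) <;> simp
  have hne : (![m0, m1, 0] : Fin 3 → ZMod 2) ≠ ![m0, m1, 1] := by
    intro hc
    have := congrFun hc 2
    simp at this
  rw [hset, Finset.sum_pair hne, part1, part1]
  simp only [Matrix.cons_val_zero, Matrix.cons_val_one, Matrix.head_cons,
    Matrix.cons_val_two, Matrix.tail_cons]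
  rcases zmod2cases m0 with rfl | rfl <;> rcases zmod2cases m1 with rfl | rfl <;>
    simp [pauliCorr, pX, pZ, map_mul, map_neg, show (0 + 1 : ZMod 2) = 1 from by decide,
      show (1 + 1 : ZMod 2) = 0 from by decide] <;>
    nlinarith [h]

theorem stmt13 (α β : ℂ) :
    (∀ x : Fin 3 → ZMod 2,
      had0 (cnot01 (jointState3 α β)) x =
        (1 / 2 : ℂ) * pauliCorr (x 0) (x 1) (fun b => if b = 0 then α else β) (x 2)) ∧
    (‖α‖ ^ 2 + ‖β‖ ^ 2 = 1 →
      ∀ m0 m1 : ZMod 2,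
        ∑ x ∈ Finset.univ.filter (fun x : Fin 3 → ZMod 2 => x 0 = m0 ∧ x 1 = m1),
          ‖had0 (cnot01 (jointState3 α β)) x‖ ^ 2 = 1 / 4) := by
  exact ⟨part1 α β, fun h m0 m1 => part2 α β h m0 m1⟩
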